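/- Let G be a graph excluding K_{1,t} as an induced subgraph, let S ⊆ V(G), and suppose the treewidth of G \ S is at most d. Then |N(S)| ≤ (t−1)(d+1)·|S|, where N(S) is the set of vertices outside S with a neighbor in S. -/

import Mathlib

/-- `G` has treewidth at most `d`. -/
def TreewidthLE {V : Type} (G : SimpleGraph V) (d : ℕ) : Prop :=
  ∃ (ι : Type) (T : SimpleGraph ι) (bag : ι → Set V),
    T.Connected ∧ T.IsAcyclic ∧
    (∀ v, ∃ i, v ∈ bag i) ∧
    (∀ u v, G.Adj u v → ∃ i, u ∈ bag i ∧ v ∈ bag i) ∧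
    (∀ v : V, (T.induce {i | v ∈ bag i}).Connected) ∧
    ∀ i, (bag i).ncard ≤ d + 1

/-- `G` has no induced subgraph isomorphic to the star `K_{1,t}`. -/
def NoInducedStar {V : Type} (G : SimpleGraph V) (t : ℕ) : Prop :=
  ¬ ∃ (v : V) (s : Finset V), s.card = t ∧ v ∉ s ∧ (∀ u ∈ s, G.Adj v u) ∧
      ∀ u ∈ s, ∀ w ∈ s, u ≠ w → ¬ G.Adj u w

open SimpleGraph Walk Set

section TreeLemmas

variable {ι : Type} {T : SimpleGraph ι}

/-- In an acyclic graph, every path realizes the distance. -/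
lemma tree_path_length_eq_dist (ha : T.IsAcyclic) {a b : ι} (P : T.Walk a b)
    (hP : P.IsPath) : P.length = T.dist a b := by
  classical
  refine le_antisymm ?_ (SimpleGraph.dist_le P)
  obtain ⟨Q, hQ⟩ := SimpleGraph.Reachable.exists_walk_length_eq_dist ⟨P⟩
  have h2 : P = Q.bypass :=
    congrArg Subtype.val (ha.path_unique ⟨P, hP⟩ ⟨Q.bypass, Q.bypass_isPath⟩)
  rw [h2, ← hQ]
  exact Q.length_bypass_le

/-- Splitting a path in a tree at an interior point splits the distance. -/
lemma tree_dist_split (ha : T.IsAcyclic) {a b z : ι} (P : T.Walk a b) (hP : P.IsPath)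
    (hz : z ∈ P.support) : T.dist a b = T.dist a z + T.dist z b := by
  classical
  rw [← tree_path_length_eq_dist ha P hP,
    ← tree_path_length_eq_dist ha _ (hP.takeUntil hz),
    ← tree_path_length_eq_dist ha _ (hP.dropUntil hz),
    ← Walk.length_append, Walk.take_spec]

/-- Converse of `tree_dist_split`: additivity of distances forces membership on the path. -/
lemma tree_mem_of_dist (hc : T.Connected) (ha : T.IsAcyclic) {a b z : ι}
    (P : T.Walk a b) (hP : P.IsPath)
    (h : T.dist a b = T.dist a z + T.dist z b) : z ∈ P.support := by
  classical
  obtain ⟨Wa, _⟩ := (hc.preconnected a z).exists_walk_length_eq_dist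
  obtain ⟨Wb, _⟩ := (hc.preconnected z b).exists_walk_length_eq_dist
  set Pa := Wa.bypass with hPa'
  set Pb := Wb.bypass with hPb'
  have hPa : Pa.IsPath := Wa.bypass_isPath
  have hPb : Pb.IsPath := Wb.bypass_isPath
  have hdisj : ∀ y ∈ Pa.support, y ∈ Pb.support → y = z := by
    intro y hya hyb
    have h1 : T.dist a z = T.dist a y + T.dist y z := tree_dist_split ha Pa hPa hya
    have h2 : T.dist z b = T.dist z y + T.dist y b := tree_dist_split ha Pb hPb hyb
    have h3 : T.dist a b ≤ T.dist a y + T.dist y b := hc.dist_triangle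
    have h4 : T.dist y z = T.dist z y := SimpleGraph.dist_comm
    have h5 : T.dist z y = 0 := by omega
    exact (hc.dist_eq_zero_iff).mp (h4.trans h5)
  have happ : (Pa.append Pb).IsPath := by
    rw [Walk.isPath_def, Walk.support_append]
    refine List.Nodup.append hPa.support_nodup
      (hPb.support_nodup.sublist (List.tail_sublist _)) ?_
    intro y hya hyb
    have hyz : y = z := hdisj y hya (List.mem_of_mem_tail hyb)
    rw [hyz] at hyb
    have hnd := hPb.support_nodup
    rw [Pb.support_eq_cons] at hnd
    exact (List.nodup_cons.mp hnd).1 hyb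
  have hPeq : P = Pa.append Pb :=
    congrArg Subtype.val (ha.path_unique ⟨P, hP⟩ ⟨Pa.append Pb, happ⟩)
  rw [hPeq, Walk.mem_support_append_iff]
  exact Or.inl Pa.end_mem_support

/-- A connected induced subgraph of a tree contains every path between its vertices. -/
lemma subtree_support_subset (ha : T.IsAcyclic) {C : Set ι}
    (hC : (T.induce C).Connected) {a b : ι} (haC : a ∈ C) (hbC : b ∈ C)
    (P : T.Walk a b) (hP : P.IsPath) : ∀ z ∈ P.support, z ∈ C := by
  classical
  obtain ⟨W'⟩ := hC.preconnected ⟨a, haC⟩ ⟨b, hbC⟩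
  let W : T.Walk a b := W'.map (SimpleGraph.Embedding.induce C).toHom
  have hsupp : ∀ z ∈ W.support, z ∈ C := by
    intro z hz
    erw [SimpleGraph.Walk.support_map, List.mem_map] at hz
    obtain ⟨⟨y, hy⟩, _, rfl⟩ := hz
    exact hy
  have hPeq : P = W.bypass :=
    congrArg Subtype.val (ha.path_unique ⟨P, hP⟩ ⟨W.bypass, W.bypass_isPath⟩)
  intro z hz
  exact hsupp z (W.support_bypass_subset (hPeq ▸ hz))

/-- Gate property, walk version: if `p` is a closest point of a set `C` to `r` and there is a
path from `x` to `p` inside `C`, then `dist r x = dist r p + (length of that path)`. -/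
lemma gate_aux (hc : T.Connected) (ha : T.IsAcyclic) {C : Set ι} {r : ι}
    {x p : ι} (W : T.Walk x p) :
    (∀ q ∈ C, T.dist r p ≤ T.dist r q) → W.IsPath → (∀ z ∈ W.support, z ∈ C) →
      T.dist r x = T.dist r p + W.length := by
  classical
  induction W with
  | nil => intro _ _ _; simp
  | @cons x q p h W' ih =>
    intro hmin hPath hsub
    have hW' : W'.IsPath := hPath.of_cons
    have hxW' : x ∉ W'.support := (Walk.cons_isPath_iff h W').mp hPath |>.2
    have hq : T.dist r q = T.dist r p + W'.length :=
      ih hmin hW' (fun z hz => hsub z (by rw [Walk.support_cons]; exact List.mem_cons_of_mem _ hz))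
    have hxC : x ∈ C := hsub x (Walk.start_mem_support _)
    have hqx1 : T.dist q x = 1 := SimpleGraph.dist_eq_one_iff_adj.mpr h.symm
    obtain ⟨RW, _⟩ := (hc.preconnected r x).exists_walk_length_eq_dist
    set R := RW.bypass with hR
    have hRp : R.IsPath := RW.bypass_isPath
    have hgoal : T.dist r x = T.dist r q + 1 := by
      by_cases hmem : q ∈ R.support
      · have := tree_dist_split ha R hRp hmem
        omega
      · -- the concatenation `R.concat h` is a path from r to q
        have hconc : (R.concat h).IsPath := by
          rw [Walk.isPath_def, Walk.support_concat]
          refine List.Nodup.append hRp.support_nodup (List.nodup_singleton q) ?_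
          intro y hy hy'
          rw [List.mem_singleton] at hy'
          subst hy'
          exact hmem hy
        have hlen : R.length + 1 = T.dist r q := by
          have := tree_path_length_eq_dist ha _ hconc
          simpa [Walk.length_concat] using this
        have hRlen : R.length = T.dist r x := tree_path_length_eq_dist ha R hRp
        -- now derive a contradiction using minimality of p
        obtain ⟨PW, _⟩ := (hc.preconnected r p).exists_walk_length_eq_dist
        set Pp := PW.bypass with hPp'
        have hPpp : Pp.IsPath := PW.bypass_isPath
        have hPplen : Pp.length = T.dist r p := tree_path_length_eq_dist ha Pp hPpp
        have hW'rev : W'.reverse.IsPath := hW'.reverse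
        have hW2len : (Pp.append W'.reverse).length = T.dist r q := by
          rw [Walk.length_append, Walk.length_reverse, hPplen, hq]
        have hBeq : (Pp.append W'.reverse).bypass = R.concat h := by
          exact congrArg Subtype.val
            (ha.path_unique ⟨_, (Pp.append W'.reverse).bypass_isPath⟩ ⟨_, hconc⟩)
        have hxB : x ∈ (Pp.append W'.reverse).support := by
          apply Walk.support_bypass_subset
          rw [hBeq, Walk.support_concat]
          simp
        rw [Walk.mem_support_append_iff] at hxB
        rcases hxB with hxPp | hxW'r
        · have hsplit : T.dist r p = T.dist r x + T.dist x p :=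
            tree_dist_split ha Pp hPpp hxPp
          have hxp : T.dist x p = W'.length + 1 := by
            have := tree_path_length_eq_dist ha _ hPath
            simpa using this.symm
          have hminx := hmin x hxC
          omega
        · exfalso
          rw [Walk.support_reverse, List.mem_reverse] at hxW'r
          exact hxW' hxW'r
    rw [hgoal, hq]
    simp only [Walk.length_cons]
    omega

/-- Gate property: distances from `r` to points of a subtree `C` go through the closest point. -/
lemma gate_dist (hc : T.Connected) (ha : T.IsAcyclic) {C : Set ι}
    (hC : (T.induce C).Connected) {r p : ι} (hpC : p ∈ C)
    (hmin : ∀ q ∈ C, T.dist r p ≤ T.dist r q) {x : ι} (hxC : x ∈ C) :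
    T.dist r x = T.dist r p + T.dist x p := by
  classical
  obtain ⟨W'⟩ := hC.preconnected ⟨x, hxC⟩ ⟨p, hpC⟩
  set W : T.Walk x p := (W'.map (SimpleGraph.Embedding.induce C).toHom).bypass with hW
  have hWp : W.IsPath := Walk.bypass_isPath _
  have hWsub : ∀ z ∈ W.support, z ∈ C := by
    intro z hz
    have hz' := Walk.support_bypass_subset _ hz
    erw [SimpleGraph.Walk.support_map, List.mem_map] at hz'
    obtain ⟨⟨y, hy⟩, _, rfl⟩ := hz'
    exact hy
  have := gate_aux hc ha W hmin hWp hWsub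
  rwa [tree_path_length_eq_dist ha W hWp] at this

/-- If two subtrees intersect, the farther gate lies in the other subtree. -/
lemma gate_mem (hc : T.Connected) (ha : T.IsAcyclic) {Cu Cv : Set ι}
    (hCu : (T.induce Cu).Connected) (hCv : (T.induce Cv).Connected)
    {r pu pv j : ι} (hpu : pu ∈ Cu) (hminu : ∀ q ∈ Cu, T.dist r pu ≤ T.dist r q)
    (hpv : pv ∈ Cv) (hminv : ∀ q ∈ Cv, T.dist r pv ≤ T.dist r q)
    (hju : j ∈ Cu) (hjv : j ∈ Cv)
    (hle : T.dist r pu ≤ T.dist r pv) : pv ∈ Cu := by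
  classical
  obtain ⟨RW, _⟩ := (hc.preconnected r j).exists_walk_length_eq_dist
  set R := RW.bypass with hR
  have hRp : R.IsPath := RW.bypass_isPath
  have hv : T.dist r j = T.dist r pv + T.dist pv j := by
    have := gate_dist hc ha hCv hpv hminv hjv
    rwa [SimpleGraph.dist_comm (u := j)] at this
  have hu : T.dist r j = T.dist r pu + T.dist pu j := by
    have := gate_dist hc ha hCu hpu hminu hju
    rwa [SimpleGraph.dist_comm (u := j)] at this
  have hmemv : pv ∈ R.support := tree_mem_of_dist hc ha R hRp hv
  have hmemu : pu ∈ R.support := tree_mem_of_dist hc ha R hRp hu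
  have hsplit := R.take_spec hmemu
  rw [← hsplit, Walk.mem_support_append_iff] at hmemv
  rcases hmemv with htake | hdrop
  · have h1 : T.dist r pu = T.dist r pv + T.dist pv pu :=
      tree_dist_split ha _ (hRp.takeUntil hmemu) htake
    have h0 : T.dist pv pu = 0 := by omega
    have : pv = pu := (hc.dist_eq_zero_iff).mp h0
    rwa [this]
  · exact subtree_support_subset ha hCu hpu hju _ (hRp.dropUntil hmemu) pv hdrop

/-- A closest point of a nonempty set to `r` exists. -/
lemma exists_nearest (r : ι) {C : Set ι} (hne : C.Nonempty) :
    ∃ p ∈ C, ∀ q ∈ C, T.dist r p ≤ T.dist r q := by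
  classical
  obtain ⟨p, hpC, hdist⟩ := Nat.sInf_mem (hne.image (fun i => T.dist r i))
  refine ⟨p, hpC, fun q hq => ?_⟩
  have : T.dist r p = sInf ((fun i => T.dist r i) '' C) := hdist
  rw [this]
  exact Nat.sInf_le ⟨q, hq, rfl⟩

end TreeLemmas

lemma ncard_biUnion_le' {α β : Type*} (s : Finset α) (f : α → Set β) :
    (⋃ a ∈ s, f a).ncard ≤ ∑ a ∈ s, (f a).ncard := by
  classical
  induction s using Finset.induction with
  | empty => simp
  | @insert a s ha ih =>
    rw [Finset.sum_insert ha]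
    have : (⋃ x ∈ (insert a s : Finset α), f x) = f a ∪ ⋃ x ∈ s, f x := by
      simp [Set.biUnion_insert]
    rw [this]
    exact le_trans (Set.ncard_union_le _ _) (by omega)

/-- Key lemma: in a graph with a width-`d` tree decomposition, any set with independence
number at most `α` has at most `(d+1)·α` vertices. -/
lemma key_bound {W : Type} [Fintype W] {H : SimpleGraph W}
    {ι : Type} {T : SimpleGraph ι} {bag : ι → Set W} (hc : T.Connected) (ha : T.IsAcyclic)
    (hcov : ∀ v, ∃ i, v ∈ bag i)
    (hedge : ∀ u v, H.Adj u v → ∃ i, u ∈ bag i ∧ v ∈ bag i)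
    (hsub : ∀ v : W, (T.induce {i | v ∈ bag i}).Connected)
    {d : ℕ} (hbag : ∀ i, (bag i).ncard ≤ d + 1) :
    ∀ (α : ℕ) (A : Set W),
      (∀ s : Finset W, ↑s ⊆ A → (∀ u ∈ s, ∀ w ∈ s, u ≠ w → ¬H.Adj u w) → s.card ≤ α) →
      A.ncard ≤ (d + 1) * α := by
  classical
  intro α
  induction α with
  | zero =>
    intro A hA
    rcases A.eq_empty_or_nonempty with rfl | ⟨v, hv⟩
    · simp
    · have := hA {v} (by simpa using hv) (by simp)
      simp at this
  | succ α ih =>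
    intro A hA
    rcases A.eq_empty_or_nonempty with rfl | hAne
    · simp
    obtain ⟨r⟩ : Nonempty ι := hc.nonempty
    -- for each vertex, a closest bag containing it
    have hpick : ∀ v : W, ∃ p ∈ {i | v ∈ bag i},
        ∀ q ∈ {i | v ∈ bag i}, T.dist r p ≤ T.dist r q := by
      intro v
      obtain ⟨i, hi⟩ := hcov v
      exact exists_nearest r ⟨i, hi⟩
    choose p hp hpmin using hpick
    -- pick the vertex of A whose gate is farthest
    have hAfin : A.toFinset.Nonempty := by
      rwa [Set.toFinset_nonempty]
    obtain ⟨v, hvA, hvmax⟩ := A.toFinset.exists_max_image (fun w => T.dist r (p w)) hAfin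
    rw [Set.mem_toFinset] at hvA
    set i0 := p v with hi0
    have hvbag : v ∈ bag i0 := hp v
    -- all neighbors of v inside A lie in bag i0
    have hnb : ∀ u ∈ A, H.Adj v u → u ∈ bag i0 := by
      intro u hu hadj
      obtain ⟨j, hvj, huj⟩ := hedge v u hadj
      exact gate_mem hc ha (hsub u) (hsub v) (hp u) (hpmin u) (hp v) (hpmin v)
        huj hvj (hvmax u (Set.mem_toFinset.mpr hu))
    set A' := A \ bag i0 with hA'
    have hA'bound : ∀ s : Finset W, ↑s ⊆ A' →
        (∀ u ∈ s, ∀ w ∈ s, u ≠ w → ¬H.Adj u w) → s.card ≤ α := by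
      intro s hs hind
      classical
      have hvs : v ∉ s := by
        intro hvs
        exact (hs hvs).2 hvbag
      have hins : (insert v s : Finset W).card ≤ α + 1 := by
        apply hA
        · intro x hx
          rcases Finset.mem_insert.mp hx with rfl | hx
          · exact hvA
          · exact (hs hx).1
        · intro a ha b hb hab hadj
          rcases Finset.mem_insert.mp ha with ha' | ha'
          · rcases Finset.mem_insert.mp hb with hb' | hb'
            · exact absurd (ha'.trans hb'.symm) hab
            · subst ha'
              exact (hs hb').2 (hnb b (hs hb').1 hadj)
          · rcases Finset.mem_insert.mp hb with hb' | hb'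
            · subst hb'
              exact (hs ha').2 (hnb a (hs ha').1 hadj.symm)
            · exact hind a ha' b hb' hab hadj
      rwa [Finset.card_insert_of_notMem hvs, Nat.add_le_add_iff_right] at hins
    have h1 : A'.ncard ≤ (d + 1) * α := ih A' hA'bound
    have h2 : (A ∩ bag i0).ncard ≤ d + 1 :=
      le_trans (Set.ncard_le_ncard Set.inter_subset_right (bag i0).toFinite) (hbag i0)
    have h3 : A' ∪ (A ∩ bag i0) = A := Set.diff_union_inter A (bag i0)
    calc A.ncard = (A' ∪ (A ∩ bag i0)).ncard := by rw [h3]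
      _ ≤ A'.ncard + (A ∩ bag i0).ncard := Set.ncard_union_le _ _
      _ ≤ (d + 1) * α + (d + 1) := by omega
      _ = (d + 1) * (α + 1) := by ring

theorem star_free_neighborhood_bound {V : Type} [Fintype V] (G : SimpleGraph V)
    (d t : ℕ) (S : Set V)
    (hstar : NoInducedStar G t)
    (htw : TreewidthLE (G.induce Sᶜ) d) :
    {v : V | v ∉ S ∧ ∃ u ∈ S, G.Adj u v}.ncard ≤ (t - 1) * (d + 1) * S.ncard := by
  classical
  obtain ⟨ι, T, bag, hc, ha, hcov, hedge, hsub, hbag⟩ := htw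
  set A : V → Set ↥(Sᶜ) := fun u => {x | G.Adj u ↑x} with hAdef
  -- per-vertex bound
  have hper : ∀ u ∈ S, (A u).ncard ≤ (d + 1) * (t - 1) := by
    intro u hu
    apply key_bound hc ha hcov hedge hsub hbag
    intro s hs hind
    by_contra hcard
    have htcard : t ≤ s.card := by omega
    obtain ⟨s₀, hs₀s, hs₀card⟩ := Finset.exists_subset_card_eq htcard
    apply hstar
    refine ⟨u, s₀.image Subtype.val, ?_, ?_, ?_, ?_⟩
    · rw [Finset.card_image_of_injective _ Subtype.val_injective, hs₀card]
    · intro hmem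
      obtain ⟨x, _, hxu⟩ := Finset.mem_image.mp hmem
      exact x.2 (hxu ▸ hu)
    · intro w hw
      obtain ⟨x, hx, rfl⟩ := Finset.mem_image.mp hw
      exact hs (hs₀s hx)
    · intro a hamem b hbmem hab hadj
      obtain ⟨x, hx, rfl⟩ := Finset.mem_image.mp hamem
      obtain ⟨y, hy, rfl⟩ := Finset.mem_image.mp hbmem
      have hxy : x ≠ y := fun h => hab (congrArg Subtype.val h)
      exact hind x (hs₀s hx) y (hs₀s hy) hxy hadj
  -- N(S) is covered by the neighborhoods
  have hcover : {v : V | v ∉ S ∧ ∃ u ∈ S, G.Adj u v} ⊆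
      ⋃ u ∈ S.toFinset, (Subtype.val '' A u) := by
    rintro v ⟨hvS, u, huS, hadj⟩
    refine Set.mem_biUnion (Set.mem_toFinset.mpr huS) ?_
    exact ⟨⟨v, hvS⟩, hadj, rfl⟩
  calc {v : V | v ∉ S ∧ ∃ u ∈ S, G.Adj u v}.ncard
      ≤ (⋃ u ∈ S.toFinset, (Subtype.val '' A u)).ncard :=
        Set.ncard_le_ncard hcover (Set.toFinite _)
    _ ≤ ∑ u ∈ S.toFinset, (Subtype.val '' A u).ncard := ncard_biUnion_le' _ _
    _ ≤ ∑ _u ∈ S.toFinset, (d + 1) * (t - 1) := by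
        apply Finset.sum_le_sum
        intro u hu
        rw [Set.ncard_image_of_injective _ Subtype.val_injective]
        exact hper u (Set.mem_toFinset.mp hu)
    _ = S.toFinset.card * ((d + 1) * (t - 1)) := by
        rw [Finset.sum_const, smul_eq_mul]
    _ = (t - 1) * (d + 1) * S.ncard := by
        rw [Set.ncard_eq_toFinset_card' S]; ring
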